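/- arXiv:1611.09536 — 3 statements merged into one kernel-verified Lean document; each statement's English description precedes it below -/
import Mathlib

section
/- Let r be a k-restraint on the complete graph K_n. Then r maximizes π_r(K_n, x) for all sufficiently large x among all k-restraints if and only if r is a proper restraint, i.e. the sets r(u), u ∈ V(K_n), are pairwise disjoint. -/
open Finset

private def Inj (n x : ℕ) : Finset (Fin n → ℕ) :=
  (Fintype.piFinset fun _ : Fin n => Finset.Icc 1 x).filter Function.Injective

private lemma mem_Inj {n x : ℕ} {c : Fin n → ℕ} :
    c ∈ Inj n x ↔ (∀ v, c v ∈ Finset.Icc 1 x) ∧ Function.Injective c := by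
  simp [Inj, Fintype.mem_piFinset]

/-- number of injective colourings with values prescribed by φ on s -/
private def cnt (n x : ℕ) (s : Finset (Fin n)) (φ : Fin n → ℕ) : ℕ :=
  ((Inj n x).filter (fun c => ∀ v ∈ s, c v = φ v)).card

private lemma count_fix (n x : ℕ) (s : Finset (Fin n)) (φ : Fin n → ℕ)
    (hinj : Set.InjOn φ s) (hmem : ∀ v ∈ s, φ v ∈ Finset.Icc 1 x) :
    cnt n x s φ = (x - s.card).descFactorial (n - s.card) := by
  classical
  rw [cnt, ← Fintype.card_coe]
  have e : {c // c ∈ (Inj n x).filter (fun c => ∀ v ∈ s, c v = φ v)} ≃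
      ((sᶜ : Finset (Fin n)) ↪ ((Finset.Icc 1 x) \ s.image φ : Finset ℕ)) := by
    refine
      { toFun := fun c => ⟨fun v => ⟨c.1 v.1, ?_⟩, ?_⟩
        invFun := fun e => ⟨fun v => if h : v ∈ s then φ v else
          (e ⟨v, by simpa using h⟩).1, ?_⟩
        left_inv := ?_
        right_inv := ?_ }
    · obtain ⟨hc, hfix⟩ := Finset.mem_filter.1 c.2
      obtain ⟨hIcc, hcinj⟩ := mem_Inj.1 hc
      rw [Finset.mem_sdiff]
      refine ⟨hIcc _, ?_⟩
      intro hmem'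
      obtain ⟨u, hu, hu2⟩ := Finset.mem_image.1 hmem'
      rw [← hfix u hu] at hu2
      have := hcinj hu2
      have hv := v.2
      rw [Finset.mem_compl] at hv
      exact hv (this ▸ hu)
    · intro a b hab
      obtain ⟨hc, hfix⟩ := Finset.mem_filter.1 c.2
      obtain ⟨hIcc, hcinj⟩ := mem_Inj.1 hc
      exact Subtype.ext (hcinj (congrArg Subtype.val hab))
    · rw [Finset.mem_filter]
      constructor
      · rw [mem_Inj]
        constructor
        · intro v
          by_cases h : v ∈ s
          · simpa [h] using hmem v h
          · simp only [h, dif_neg, not_false_iff]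
            have := (e ⟨v, by simpa using h⟩).2
            exact (Finset.mem_sdiff.1 this).1
        · intro a b hab
          by_cases ha : a ∈ s <;> by_cases hb : b ∈ s
          · simp only [ha, hb, dif_pos] at hab
            exact hinj ha hb hab
          · exfalso
            simp only [ha, hb, dif_pos, dif_neg, not_false_iff] at hab
            have := (e ⟨b, by simpa using hb⟩).2
            rw [Finset.mem_sdiff] at this
            exact this.2 (Finset.mem_image.2 ⟨a, ha, hab⟩)
          · exfalso
            simp only [ha, hb, dif_pos, dif_neg, not_false_iff] at hab
            have := (e ⟨a, by simpa using ha⟩).2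
            rw [Finset.mem_sdiff] at this
            exact this.2 (Finset.mem_image.2 ⟨b, hb, hab.symm⟩)
          · simp only [ha, hb, dif_neg, not_false_iff] at hab
            have := e.injective (Subtype.ext hab)
            exact congrArg Subtype.val this
      · intro v hv
        simp [hv]
    · intro c
      apply Subtype.ext
      funext v
      obtain ⟨hc, hfix⟩ := Finset.mem_filter.1 c.2
      by_cases h : v ∈ s
      · simp [h, (hfix v h).symm]
      · simp [h]; rfl
    · intro e
      apply DFunLike.ext
      intro v
      apply Subtype.ext
      have hv : (v : Fin n) ∉ s := Finset.mem_compl.1 v.2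
      simp [hv]
  rw [Fintype.card_congr e, Fintype.card_embedding_eq, Fintype.card_coe, Fintype.card_coe,
    Finset.card_sdiff_of_subset (Finset.image_subset_iff.2 hmem), Finset.card_image_of_injOn hinj,
    Nat.card_Icc, Finset.card_compl, Fintype.card_fin]
  congr 1

private lemma count_mixed (n x k : ℕ) (r : Fin n → Finset ℕ)
    (hcard : ∀ v, (r v).card = k) (hsub : ∀ v, r v ⊆ Finset.Icc 1 x)
    (hdisj : ∀ u v : Fin n, u ≠ v → Disjoint (r u) (r v)) :
    ∀ (s₂ s₁ : Finset (Fin n)) (φ : Fin n → ℕ), Disjoint s₁ s₂ →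
      Set.InjOn φ s₁ → (∀ v ∈ s₁, φ v ∈ Finset.Icc 1 x) →
      (∀ u ∈ s₁, ∀ v ∈ s₂, φ u ∉ r v) →
      ((Inj n x).filter (fun c => (∀ v ∈ s₁, c v = φ v) ∧ ∀ v ∈ s₂, c v ∈ r v)).card
        = k ^ s₂.card * (x - (s₁.card + s₂.card)).descFactorial (n - (s₁.card + s₂.card)) := by
  classical
  intro s₂
  induction s₂ using Finset.induction_on with
  | empty =>
    intro s₁ φ h1 h2 h3 _
    have : ((Inj n x).filter (fun c => (∀ v ∈ s₁, c v = φ v) ∧ ∀ v ∈ (∅ : Finset (Fin n)), c v ∈ r v))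
        = (Inj n x).filter (fun c => ∀ v ∈ s₁, c v = φ v) := by
      apply Finset.filter_congr
      intro c _
      simp
    rw [this]
    have := count_fix n x s₁ φ h2 h3
    rw [cnt] at this
    simpa using this
  | @insert v t hv ih =>
    intro s₁ φ h1 h2 h3 h4
    have hvs : v ∉ s₁ := fun h => (Finset.disjoint_left.1 h1) h (Finset.mem_insert_self v t)
    have hne1 : ∀ u ∈ s₁, u ≠ v := by
      intro u hu h
      exact hvs (h ▸ hu)
    have hset : ((Inj n x).filter (fun c => (∀ u ∈ s₁, c u = φ u) ∧ ∀ w ∈ insert v t, c w ∈ r w))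
        = (r v).biUnion (fun a => (Inj n x).filter
            (fun c => (∀ u ∈ insert v s₁, c u = Function.update φ v a u) ∧ ∀ w ∈ t, c w ∈ r w)) := by
      ext c
      simp only [Finset.mem_biUnion, Finset.mem_filter]
      constructor
      · rintro ⟨hcI, hfix, hmem⟩
        refine ⟨c v, hmem v (Finset.mem_insert_self v t), hcI, ?_, fun w hw => hmem w (Finset.mem_insert_of_mem hw)⟩
        intro u hu
        rcases Finset.mem_insert.1 hu with rfl | hu
        · rw [Function.update_self]
        · rw [Function.update_of_ne (hne1 u hu)]
          exact hfix u hu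
      · rintro ⟨a, ha, hcI, hfix, hmem⟩
        refine ⟨hcI, fun u hu => ?_, fun w hw => ?_⟩
        · have := hfix u (Finset.mem_insert_of_mem hu)
          rwa [Function.update_of_ne (hne1 u hu)] at this
        · rcases Finset.mem_insert.1 hw with rfl | hw
          · have := hfix w (Finset.mem_insert_self _ _)
            rw [this, Function.update_self]
            exact ha
          · exact hmem w hw
    rw [hset, Finset.card_biUnion]
    · have hstep : ∀ a ∈ r v,
          ((Inj n x).filter (fun c => (∀ u ∈ insert v s₁, c u = Function.update φ v a u) ∧ ∀ w ∈ t, c w ∈ r w)).card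
            = k ^ t.card * (x - (s₁.card + 1 + t.card)).descFactorial (n - (s₁.card + 1 + t.card)) := by
        intro a ha
        have h1' : Disjoint (insert v s₁) t := by
          rw [Finset.disjoint_left]
          intro u hu hut
          rcases Finset.mem_insert.1 hu with rfl | hu
          · exact hv hut
          · exact (Finset.disjoint_left.1 h1) hu (Finset.mem_insert_of_mem hut)
        have h2' : Set.InjOn (Function.update φ v a) ↑(insert v s₁) := by
          intro p hp q hq hpq
          simp only [Finset.coe_insert, Set.mem_insert_iff, Finset.mem_coe] at hp hq
          rcases hp with rfl | hp <;> rcases hq with rfl | hq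
          · rfl
          · rw [Function.update_self, Function.update_of_ne (hne1 q (Finset.mem_coe.1 hq))] at hpq
            exact absurd ha (hpq ▸ h4 q hq p (Finset.mem_insert_self p t))
          · rw [Function.update_self, Function.update_of_ne (hne1 p (Finset.mem_coe.1 hp))] at hpq
            exact absurd ha (hpq.symm ▸ h4 p hp q (Finset.mem_insert_self q t))
          · rw [Function.update_of_ne (hne1 p (Finset.mem_coe.1 hp)),
              Function.update_of_ne (hne1 q (Finset.mem_coe.1 hq))] at hpq
            exact h2 hp hq hpq
        have h3' : ∀ u ∈ insert v s₁, Function.update φ v a u ∈ Finset.Icc 1 x := by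
          intro u hu
          rcases Finset.mem_insert.1 hu with rfl | hu
          · rw [Function.update_self]; exact hsub u ha
          · rw [Function.update_of_ne (hne1 u hu)]; exact h3 u hu
        have h4' : ∀ u ∈ insert v s₁, ∀ w ∈ t, Function.update φ v a u ∉ r w := by
          intro u hu w hw
          rcases Finset.mem_insert.1 hu with rfl | hu
          · rw [Function.update_self]
            exact Finset.disjoint_left.1 (hdisj u w (fun h => hv (h ▸ hw))) ha
          · rw [Function.update_of_ne (hne1 u hu)]
            exact h4 u hu w (Finset.mem_insert_of_mem hw)
        have := ih (insert v s₁) (Function.update φ v a) h1' h2' h3' h4'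
        rw [Finset.card_insert_of_notMem hvs] at this
        exact this
      rw [Finset.sum_congr rfl hstep, Finset.sum_const, hcard v,
        Finset.card_insert_of_notMem hv, smul_eq_mul]
      have hidx : s₁.card + (t.card + 1) = s₁.card + 1 + t.card := by omega
      rw [hidx, pow_succ]
      ring
    · intro a ha b hb hab
      show Disjoint _ _
      rw [Finset.disjoint_left]
      intro c hc hc'
      obtain ⟨_, hfa, _⟩ := Finset.mem_filter.1 hc
      obtain ⟨_, hfb, _⟩ := Finset.mem_filter.1 hc'
      have ha' := hfa v (Finset.mem_insert_self v s₁)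
      have hb' := hfb v (Finset.mem_insert_self v s₁)
      rw [Function.update_self] at ha' hb'
      exact hab (by rw [← ha', hb'])

/-- the number of colourings satisfying the restraint on all of `q` -/
private def W (n x : ℕ) (r : Fin n → Finset ℕ) (q : Finset (Fin n)) : ℕ :=
  ((Inj n x).filter (fun c => ∀ v ∈ q, c v ∈ r v)).card

/-- level-j Bonferroni sum -/
private def S (n x : ℕ) (r : Fin n → Finset ℕ) (j : ℕ) : ℕ :=
  ∑ c ∈ Inj n x, ((Finset.univ.filter (fun v => c v ∈ r v)).card.choose j)

private lemma S_swap (n x : ℕ) (r : Fin n → Finset ℕ) (j : ℕ) :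
    S n x r j = ∑ q ∈ Finset.univ.powersetCard j, W n x r q := by
  classical
  rw [S]
  have h1 : ∀ c : Fin n → ℕ,
      ((Finset.univ.filter (fun v => c v ∈ r v)).card.choose j)
        = ∑ q ∈ Finset.univ.powersetCard j, (if q ⊆ Finset.univ.filter (fun v => c v ∈ r v) then 1 else 0) := by
    intro c
    rw [← Finset.card_powersetCard]
    have hpc : (Finset.univ.filter (fun v => c v ∈ r v)).powersetCard j
        = (Finset.univ.powersetCard j).filter
            (fun q => q ⊆ Finset.univ.filter (fun v => c v ∈ r v)) := by
      ext q
      simp only [Finset.mem_powersetCard, Finset.mem_filter, Finset.subset_univ, true_and]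
      tauto
    rw [hpc, Finset.card_filter]
  rw [Finset.sum_congr rfl (fun c _ => h1 c), Finset.sum_comm]
  apply Finset.sum_congr rfl
  intro q _
  rw [W, Finset.card_filter]
  apply Finset.sum_congr rfl
  intro c _
  have hiff : (q ⊆ Finset.univ.filter (fun v => c v ∈ r v)) ↔ (∀ v ∈ q, c v ∈ r v) := by
    constructor
    · intro h v hv
      exact (Finset.mem_filter.1 (h hv)).2
    · intro h v hv
      exact Finset.mem_filter.2 ⟨Finset.mem_univ v, h v hv⟩
  rw [if_congr hiff rfl rfl]

private lemma W_proper (n x k : ℕ) (r : Fin n → Finset ℕ)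
    (hcard : ∀ v, (r v).card = k) (hsub : ∀ v, r v ⊆ Finset.Icc 1 x)
    (hdisj : ∀ u v : Fin n, u ≠ v → Disjoint (r u) (r v)) (q : Finset (Fin n)) :
    W n x r q = k ^ q.card * (x - q.card).descFactorial (n - q.card) := by
  classical
  have h := count_mixed n x k r hcard hsub hdisj q ∅ (fun _ => 0)
    (Finset.disjoint_empty_left q) (by simp [Set.InjOn]) (by simp) (by simp)
  simp only [Finset.card_empty, zero_add] at h
  rw [W, ← h]
  congr 1
  apply Finset.filter_congr
  intro c _
  simp

private lemma S_proper (n x k : ℕ) (r : Fin n → Finset ℕ)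
    (hcard : ∀ v, (r v).card = k) (hsub : ∀ v, r v ⊆ Finset.Icc 1 x)
    (hdisj : ∀ u v : Fin n, u ≠ v → Disjoint (r u) (r v)) (j : ℕ) :
    S n x r j = n.choose j * (k ^ j * (x - j).descFactorial (n - j)) := by
  classical
  rw [S_swap]
  have h : ∀ q ∈ Finset.univ.powersetCard j, W n x r q = k ^ j * (x - j).descFactorial (n - j) := by
    intro q hq
    have hcq : q.card = j := (Finset.mem_powersetCard.1 hq).2
    rw [W_proper n x k r hcard hsub hdisj q, hcq]
  rw [Finset.sum_congr rfl h, Finset.sum_const, Finset.card_powersetCard, Finset.card_univ,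
    Fintype.card_fin, smul_eq_mul]

/-- exact count for a single vertex, arbitrary restraint -/
private lemma W_single (n x k : ℕ) (r : Fin n → Finset ℕ) (v : Fin n)
    (hcard : (r v).card = k) (hsub : r v ⊆ Finset.Icc 1 x) :
    W n x r {v} = k * (x - 1).descFactorial (n - 1) := by
  classical
  have hset : ((Inj n x).filter (fun c => ∀ w ∈ ({v} : Finset (Fin n)), c w ∈ r w))
      = (r v).biUnion (fun a => (Inj n x).filter (fun c => ∀ w ∈ ({v} : Finset (Fin n)), c w = (fun _ => a) w)) := by
    ext c
    simp only [Finset.mem_biUnion, Finset.mem_filter, Finset.mem_singleton]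
    constructor
    · rintro ⟨hcI, hmem⟩
      exact ⟨c v, hmem v rfl, hcI, fun w hw => by rw [hw]⟩
    · rintro ⟨a, ha, hcI, hfix⟩
      refine ⟨hcI, fun w hw => ?_⟩
      rw [hfix w hw, hw]
      exact ha
  rw [W, hset, Finset.card_biUnion]
  · have hterm : ∀ a ∈ r v,
        ((Inj n x).filter (fun c => ∀ w ∈ ({v} : Finset (Fin n)), c w = (fun _ => a) w)).card
          = (x - 1).descFactorial (n - 1) := by
      intro a ha
      have := count_fix n x {v} (fun _ => a) (by
        intro p hp q hq _
        simp only [Finset.coe_singleton, Set.mem_singleton_iff] at hp hq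
        rw [hp, hq])
        (fun w _ => hsub ha)
      rw [cnt, Finset.card_singleton] at this
      exact this
    rw [Finset.sum_congr rfl hterm, Finset.sum_const, hcard, smul_eq_mul]
  · intro a ha b hb hab
    show Disjoint _ _
    rw [Finset.disjoint_left]
    intro c hc hc'
    have h1 := (Finset.mem_filter.1 hc).2 v (Finset.mem_singleton_self v)
    have h2 := (Finset.mem_filter.1 hc').2 v (Finset.mem_singleton_self v)
    simp only [] at h1 h2
    exact hab (h1 ▸ h2 ▸ rfl)

private lemma W_pair (n x k : ℕ) (r : Fin n → Finset ℕ) (u v : Fin n) (huv : u ≠ v)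
    (hcu : (r u).card = k) (hcv : (r v).card = k)
    (hsu : r u ⊆ Finset.Icc 1 x) (hsv : r v ⊆ Finset.Icc 1 x) :
    W n x r {u, v} + (r u ∩ r v).card * (x - 2).descFactorial (n - 2)
      = k ^ 2 * (x - 2).descFactorial (n - 2) := by
  classical
  set D := (x - 2).descFactorial (n - 2) with hD
  have hset : ((Inj n x).filter (fun c => ∀ w ∈ ({u, v} : Finset (Fin n)), c w ∈ r w))
      = ((r u) ×ˢ (r v)).biUnion (fun ab => (Inj n x).filter (fun c => c u = ab.1 ∧ c v = ab.2)) := by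
    ext c
    simp only [Finset.mem_biUnion, Finset.mem_filter, Finset.mem_insert, Finset.mem_singleton,
      Finset.mem_product]
    constructor
    · rintro ⟨hcI, hmem⟩
      exact ⟨(c u, c v), ⟨hmem u (Or.inl rfl), hmem v (Or.inr rfl)⟩, hcI, rfl, rfl⟩
    · rintro ⟨ab, ⟨ha, hb⟩, hcI, h1, h2⟩
      refine ⟨hcI, fun w hw => ?_⟩
      rcases hw with rfl | rfl
      · rw [h1]; exact ha
      · rw [h2]; exact hb
  have hdisjU : ∀ a ∈ (r u) ×ˢ (r v), ∀ b ∈ (r u) ×ˢ (r v), a ≠ b →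
      Disjoint ((Inj n x).filter (fun c => c u = a.1 ∧ c v = a.2))
        ((Inj n x).filter (fun c => c u = b.1 ∧ c v = b.2)) := by
    intro a _ b _ hab
    rw [Finset.disjoint_left]
    intro c hc hc'
    obtain ⟨_, h1, h2⟩ := Finset.mem_filter.1 hc
    obtain ⟨_, h1', h2'⟩ := Finset.mem_filter.1 hc'
    exact hab (Prod.ext (by rw [← h1, h1']) (by rw [← h2, h2']))
  have hterm : ∀ ab ∈ (r u) ×ˢ (r v),
      ((Inj n x).filter (fun c => c u = ab.1 ∧ c v = ab.2)).card
        = if ab.1 ≠ ab.2 then D else 0 := by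
    intro ab hab
    obtain ⟨ha, hb⟩ := Finset.mem_product.1 hab
    by_cases hne : ab.1 = ab.2
    · simp only [hne, ne_eq, not_true_eq_false, if_false]
      rw [Finset.card_eq_zero, Finset.filter_eq_empty_iff]
      rintro c hc ⟨h1, h2⟩
      obtain ⟨_, hcinj⟩ := mem_Inj.1 hc
      exact huv (hcinj (h1.trans h2.symm))
    · simp only [ne_eq, hne, not_false_eq_true, if_true]
      have hcf := count_fix n x {u, v} (fun w => if w = u then ab.1 else ab.2)
        (by
          intro p hp q hq hpq
          simp only [Finset.coe_insert, Finset.coe_singleton, Set.mem_insert_iff,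
            Set.mem_singleton_iff] at hp hq
          rcases hp with rfl | rfl <;> rcases hq with rfl | rfl
          · rfl
          · simp only [if_pos rfl, if_neg (Ne.symm huv)] at hpq; exact absurd hpq hne
          · simp only [if_pos rfl, if_neg (Ne.symm huv)] at hpq; exact absurd hpq.symm hne
          · rfl)
        (by
          intro w hw
          show (if w = u then ab.1 else ab.2) ∈ Finset.Icc 1 x
          by_cases hwu : w = u
          · rw [if_pos hwu]; exact hsu ha
          · rw [if_neg hwu]; exact hsv hb)
      rw [cnt, Finset.card_insert_of_notMem (by simp [huv]), Finset.card_singleton] at hcf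
      norm_num at hcf
      rw [← hD] at hcf
      rw [← hcf]
      congr 1
      apply Finset.filter_congr
      intro c _
      rw [if_neg (Ne.symm huv)]
  have hdiag : (((r u) ×ˢ (r v)).filter (fun ab => ¬ ab.1 ≠ ab.2))
      = (r u ∩ r v).image (fun a => (a, a)) := by
    ext ab
    simp only [Finset.mem_filter, Finset.mem_product, Finset.mem_image, Finset.mem_inter,
      ne_eq, not_not]
    constructor
    · rintro ⟨⟨ha, hb⟩, heq⟩
      exact ⟨ab.1, ⟨ha, heq ▸ hb⟩, Prod.ext rfl heq⟩
    · rintro ⟨a, ⟨ha, hb⟩, rfl⟩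
      exact ⟨⟨ha, hb⟩, rfl⟩
  have hdiagcard : (((r u) ×ˢ (r v)).filter (fun ab => ¬ ab.1 ≠ ab.2)).card = (r u ∩ r v).card := by
    rw [hdiag, Finset.card_image_of_injective _ (fun a b hab => (Prod.ext_iff.1 hab).1)]
  have hsplit := Finset.card_filter_add_card_filter_not
    (s := (r u) ×ˢ (r v)) (p := fun ab => ab.1 ≠ ab.2)
  rw [Finset.card_product, hcu, hcv] at hsplit
  rw [W, hset, Finset.card_biUnion hdisjU, Finset.sum_congr rfl hterm,
    Finset.sum_ite, Finset.sum_const, Finset.sum_const_zero, add_zero, smul_eq_mul, ← hdiagcard,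
    ← add_mul]
  rw [show k ^ 2 = k * k from sq k, ← hsplit]

private def fcnt (n x : ℕ) (r : Fin n → Finset ℕ) : ℕ :=
  ((Inj n x).filter (fun c => ∀ v, c v ∉ r v)).card

private def bad (n x : ℕ) (r : Fin n → Finset ℕ) : ℕ :=
  ((Inj n x).filter (fun c => ¬ ∀ v, c v ∉ r v)).card

private lemma fcnt_add_bad (n x : ℕ) (r : Fin n → Finset ℕ) :
    fcnt n x r + bad n x r = (Inj n x).card := by
  classical
  exact Finset.card_filter_add_card_filter_not (s := Inj n x) (fun c => ∀ v, c v ∉ r v)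

private lemma bad_eq_sum (n x : ℕ) (r : Fin n → Finset ℕ) :
    bad n x r = ∑ c ∈ Inj n x,
      (if (Finset.univ.filter (fun v => c v ∈ r v)).card = 0 then 0 else 1) := by
  classical
  rw [bad, Finset.card_filter]
  apply Finset.sum_congr rfl
  intro c _
  have hiff : (Finset.univ.filter (fun v => c v ∈ r v)).card = 0 ↔ ∀ v, c v ∉ r v := by
    rw [Finset.card_eq_zero, Finset.filter_eq_empty_iff]
    simp
  by_cases h : ∀ v, c v ∉ r v
  · rw [if_neg (not_not_intro h), if_pos (hiff.2 h)]
  · rw [if_pos h, if_neg (fun hc => h (hiff.1 hc))]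

private lemma ineq1 (t : ℕ) : t.choose 1 ≤ (if t = 0 then 0 else 1) + t.choose 2 := by
  cases t with
  | zero => simp
  | succ s =>
    have h1 : (s + 1).choose 2 = s.choose 1 + s.choose 2 := Nat.choose_succ_succ s 1
    have h3 : (s + 1).choose 1 = s + 1 := Nat.choose_one_right _
    have h4 : s.choose 1 = s := Nat.choose_one_right _
    simp only [Nat.succ_ne_zero, if_false]
    omega

private lemma ineq2 (t : ℕ) :
    (if t = 0 then 0 else 1) + t.choose 2 ≤ t.choose 1 + t.choose 3 := by
  cases t with
  | zero => simp
  | succ s =>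
    have h1 : (s + 1).choose 2 = s.choose 1 + s.choose 2 := Nat.choose_succ_succ s 1
    have h2 : (s + 1).choose 3 = s.choose 2 + s.choose 3 := Nat.choose_succ_succ s 2
    have h3 : (s + 1).choose 1 = s + 1 := Nat.choose_one_right _
    have h4 : s.choose 1 = s := Nat.choose_one_right _
    simp only [Nat.succ_ne_zero, if_false]
    omega

private lemma bonferroni_lower (n x : ℕ) (r : Fin n → Finset ℕ) :
    S n x r 1 ≤ bad n x r + S n x r 2 := by
  classical
  rw [bad_eq_sum, S, S, ← Finset.sum_add_distrib]
  exact Finset.sum_le_sum (fun c _ => ineq1 _)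

private lemma bonferroni_upper (n x : ℕ) (r : Fin n → Finset ℕ) :
    bad n x r + S n x r 2 ≤ S n x r 1 + S n x r 3 := by
  classical
  rw [bad_eq_sum, S, S, S, ← Finset.sum_add_distrib, ← Finset.sum_add_distrib]
  exact Finset.sum_le_sum (fun c _ => ineq2 _)

private lemma S1_arbitrary (n x k : ℕ) (r : Fin n → Finset ℕ)
    (hr : ∀ v, (r v).card = k ∧ r v ⊆ Finset.Icc 1 x) :
    S n x r 1 = n * (k * (x - 1).descFactorial (n - 1)) := by
  classical
  rw [S_swap]
  have h : ∀ q ∈ Finset.univ.powersetCard 1,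
      W n x r q = k * (x - 1).descFactorial (n - 1) := by
    intro q hq
    obtain ⟨v, rfl⟩ := Finset.card_eq_one.1 (Finset.mem_powersetCard.1 hq).2
    exact W_single n x k r v (hr v).1 (hr v).2
  rw [Finset.sum_congr rfl h, Finset.sum_const, Finset.card_powersetCard, Finset.card_univ,
    Fintype.card_fin, Nat.choose_one_right, smul_eq_mul]

private lemma main_lt (n x k : ℕ) (r r'' : Fin n → Finset ℕ)
    (hr : ∀ v, (r v).card = k ∧ r v ⊆ Finset.Icc 1 x)
    (hrd : ∀ u v : Fin n, u ≠ v → Disjoint (r u) (r v))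
    (hr'' : ∀ v, (r'' v).card = k ∧ r'' v ⊆ Finset.Icc 1 x)
    (u₀ v₀ : Fin n) (hne : u₀ ≠ v₀) (hbad : ¬ Disjoint (r'' u₀) (r'' v₀))
    (hxn : n ≤ x) (hxc : n.choose 3 * k ^ 3 + 3 ≤ x) :
    fcnt n x r'' < fcnt n x r := by
  classical
  set D2 := (x - 2).descFactorial (n - 2) with hD2
  set D3 := (x - 3).descFactorial (n - 3) with hD3
  -- S1 equality
  have hS1r : S n x r 1 = n * (k * (x - 1).descFactorial (n - 1)) := S1_arbitrary n x k r hr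
  have hS1r'' : S n x r'' 1 = n * (k * (x - 1).descFactorial (n - 1)) := S1_arbitrary n x k r'' hr''
  -- S2 for proper r
  have hS2r : S n x r 2 = n.choose 2 * (k ^ 2 * D2) :=
    S_proper n x k r (fun v => (hr v).1) (fun v => (hr v).2) hrd 2
  -- S3 for proper r
  have hS3r : S n x r 3 = n.choose 3 * (k ^ 3 * D3) :=
    S_proper n x k r (fun v => (hr v).1) (fun v => (hr v).2) hrd 3
  -- S2 bound for r''
  have hq₀ : ({u₀, v₀} : Finset (Fin n)) ∈ Finset.univ.powersetCard 2 :=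
    Finset.mem_powersetCard.2 ⟨Finset.subset_univ _, Finset.card_pair hne⟩
  have hWq₀ : W n x r'' {u₀, v₀} + D2 ≤ k ^ 2 * D2 := by
    have hp := W_pair n x k r'' u₀ v₀ hne (hr'' u₀).1 (hr'' v₀).1 (hr'' u₀).2 (hr'' v₀).2
    rw [← hD2] at hp
    have hm : 1 ≤ (r'' u₀ ∩ r'' v₀).card := by
      rw [Nat.one_le_iff_ne_zero, ← Nat.pos_iff_ne_zero, Finset.card_pos]
      exact Finset.not_disjoint_iff_nonempty_inter.1 hbad
    calc W n x r'' {u₀, v₀} + D2 ≤ W n x r'' {u₀, v₀} + (r'' u₀ ∩ r'' v₀).card * D2 := by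
          have := Nat.mul_le_mul_right D2 hm
          omega
      _ = k ^ 2 * D2 := hp
  have hWq : ∀ q ∈ Finset.univ.powersetCard 2, W n x r'' q ≤ k ^ 2 * D2 := by
    intro q hq
    obtain ⟨a, b, hab, rfl⟩ := Finset.card_eq_two.1 (Finset.mem_powersetCard.1 hq).2
    have hp := W_pair n x k r'' a b hab (hr'' a).1 (hr'' b).1 (hr'' a).2 (hr'' b).2
    rw [← hD2] at hp
    omega
  have hS2 : S n x r'' 2 + D2 ≤ S n x r 2 := by
    rw [S_swap, hS2r]
    rw [← Finset.add_sum_erase _ _ hq₀]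
    have hrest : ∑ q ∈ (Finset.univ.powersetCard 2).erase {u₀, v₀}, W n x r'' q
        ≤ ∑ q ∈ (Finset.univ.powersetCard 2).erase {u₀, v₀}, k ^ 2 * D2 :=
      Finset.sum_le_sum (fun q hq => hWq q (Finset.mem_of_mem_erase hq))
    simp only [Finset.sum_const, smul_eq_mul] at hrest
    have htot := Finset.add_sum_erase (Finset.univ.powersetCard 2) (fun _ => k ^ 2 * D2) hq₀
    simp only [Finset.sum_const, Finset.card_powersetCard, Finset.card_univ, Fintype.card_fin,
      smul_eq_mul] at htot
    omega
  -- S3 r < D2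
  have hD2pos : 0 < D2 := by
    refine Nat.pos_of_ne_zero (fun h => ?_)
    rw [hD2, Nat.descFactorial_eq_zero_iff_lt] at h
    omega
  have hS3 : S n x r 3 < D2 := by
    rw [hS3r]
    by_cases h3 : 3 ≤ n
    · have hD3pos : 0 < D3 := by
        refine Nat.pos_of_ne_zero (fun h => ?_)
        rw [hD3, Nat.descFactorial_eq_zero_iff_lt] at h
        omega
      have hsplit : D2 = (x - 2) * D3 := by
        rw [hD2, hD3, show x - 2 = (x - 3) + 1 by omega, show n - 2 = (n - 3) + 1 by omega,
          Nat.succ_descFactorial_succ]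
      rw [hsplit, ← mul_assoc]
      have h1 : n.choose 3 * k ^ 3 < x - 2 := by omega
      exact Nat.mul_lt_mul_of_lt_of_le h1 (le_refl D3) hD3pos
    · rw [Nat.choose_eq_zero_of_lt (by omega), zero_mul]
      exact hD2pos
  -- Bonferroni
  have hb1 := bonferroni_lower n x r''
  have hb2 := bonferroni_upper n x r
  have hbadlt : bad n x r < bad n x r'' := by omega
  have hf1 := fcnt_add_bad n x r
  have hf2 := fcnt_add_bad n x r''
  omega

private lemma fcnt_proper (n x k : ℕ) (r : Fin n → Finset ℕ)
    (hcard : ∀ v, (r v).card = k) (hsub : ∀ v, r v ⊆ Finset.Icc 1 x)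
    (hdisj : ∀ u v : Fin n, u ≠ v → Disjoint (r u) (r v)) :
    (fcnt n x r : ℤ) = ∑ s ∈ (Finset.univ : Finset (Fin n)).powerset,
      (-1 : ℤ) ^ s.card * (k ^ s.card * (x - s.card).descFactorial (n - s.card)) := by
  classical
  have h1 : (fcnt n x r : ℤ) = ∑ c ∈ Inj n x,
      (if (Finset.univ.filter (fun v => c v ∈ r v)) = ∅ then (1 : ℤ) else 0) := by
    rw [fcnt, Finset.card_filter]
    push_cast
    apply Finset.sum_congr rfl
    intro c _
    have hiff : (Finset.univ.filter (fun v => c v ∈ r v)) = ∅ ↔ ∀ v, c v ∉ r v := by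
      rw [Finset.filter_eq_empty_iff]
      simp
    rw [if_congr hiff.symm rfl rfl]
  rw [h1]
  have h2 : ∀ c : Fin n → ℕ,
      (if (Finset.univ.filter (fun v => c v ∈ r v)) = ∅ then (1 : ℤ) else 0)
        = ∑ s ∈ (Finset.univ : Finset (Fin n)).powerset,
            (if s ⊆ Finset.univ.filter (fun v => c v ∈ r v) then (-1 : ℤ) ^ s.card else 0) := by
    intro c
    rw [← Finset.sum_powerset_neg_one_pow_card]
    have hps : (Finset.univ.filter (fun v => c v ∈ r v)).powerset
        = ((Finset.univ : Finset (Fin n)).powerset).filter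
            (fun s => s ⊆ Finset.univ.filter (fun v => c v ∈ r v)) := by
      ext s
      simp only [Finset.mem_powerset, Finset.mem_filter, Finset.subset_univ, true_and]
    rw [hps, Finset.sum_filter]
  rw [Finset.sum_congr rfl (fun c _ => h2 c), Finset.sum_comm]
  apply Finset.sum_congr rfl
  intro s _
  have h3 : ∑ c ∈ Inj n x,
      (if s ⊆ Finset.univ.filter (fun v => c v ∈ r v) then (-1 : ℤ) ^ s.card else 0)
        = ((Inj n x).filter (fun c => ∀ v ∈ s, c v ∈ r v)).card • ((-1 : ℤ) ^ s.card) := by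
    rw [← Finset.sum_filter]
    rw [Finset.sum_const]
    congr 1
    congr 1
    apply Finset.filter_congr
    intro c _
    constructor
    · intro h v hv
      exact (Finset.mem_filter.1 (h hv)).2
    · intro h v hv
      exact Finset.mem_filter.2 ⟨Finset.mem_univ v, h v hv⟩
  rw [h3]
  have h4 := count_mixed n x k r hcard hsub hdisj s ∅ (fun _ => 0)
    (Finset.disjoint_empty_left s) (by simp [Set.InjOn]) (by simp) (by simp)
  simp only [Finset.card_empty, zero_add] at h4
  have h5 : ((Inj n x).filter (fun c => ∀ v ∈ s, c v ∈ r v)).card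
      = k ^ s.card * (x - s.card).descFactorial (n - s.card) := by
    rw [← h4]
    congr 1
    apply Finset.filter_congr
    intro c _
    simp
  rw [h5, nsmul_eq_mul]
  push_cast
  ring

private lemma fcnt_proper_eq (n x k : ℕ) (r r' : Fin n → Finset ℕ)
    (hcard : ∀ v, (r v).card = k) (hsub : ∀ v, r v ⊆ Finset.Icc 1 x)
    (hdisj : ∀ u v : Fin n, u ≠ v → Disjoint (r u) (r v))
    (hcard' : ∀ v, (r' v).card = k) (hsub' : ∀ v, r' v ⊆ Finset.Icc 1 x)
    (hdisj' : ∀ u v : Fin n, u ≠ v → Disjoint (r' u) (r' v)) :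
    fcnt n x r = fcnt n x r' := by
  have h1 := fcnt_proper n x k r hcard hsub hdisj
  have h2 := fcnt_proper n x k r' hcard' hsub' hdisj'
  exact_mod_cast h1.trans h2.symm

/-- the canonical proper restraint -/
private def pr (n k : ℕ) : Fin n → Finset ℕ := fun v => Finset.Ioc (k * v.1) (k * v.1 + k)

private lemma pr_card (n k : ℕ) (v : Fin n) : ((pr n k) v).card = k := by
  rw [pr, Nat.card_Ioc]
  omega

private lemma pr_sub (n k : ℕ) (v : Fin n) : (pr n k) v ⊆ Finset.Icc 1 (k * n) := by
  intro a ha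
  rw [pr, Finset.mem_Ioc] at ha
  have hv : v.1 + 1 ≤ n := v.isLt
  have hmul : k * (v.1 + 1) ≤ k * n := Nat.mul_le_mul_left k hv
  rw [Nat.mul_succ] at hmul
  rw [Finset.mem_Icc]
  omega

private lemma pr_disj (n k : ℕ) : ∀ u v : Fin n, u ≠ v → Disjoint (pr n k u) (pr n k v) := by
  intro u v huv
  rw [Finset.disjoint_left]
  intro a hau hav
  rw [pr, Finset.mem_Ioc] at hau hav
  have hne : u.1 ≠ v.1 := fun h => huv (Fin.ext h)
  rcases Nat.lt_or_ge u.1 v.1 with h | h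
  · have : k * (u.1 + 1) ≤ k * v.1 := Nat.mul_le_mul_left k h
    rw [Nat.mul_succ] at this
    omega
  · have hlt : v.1 < u.1 := by omega
    have : k * (v.1 + 1) ≤ k * u.1 := Nat.mul_le_mul_left k hlt
    rw [Nat.mul_succ] at this
    omega

/-- The number of proper `x`-colourings of `G` (colours `1,…,x`) permitted by the restraint `r`,
i.e. proper colourings `c` with `c v ∉ r v` for all `v`. -/
noncomputable def rcount {V : Type} [Fintype V] (G : SimpleGraph V) (r : V → Finset ℕ)
    (x : ℕ) : ℕ := by
  classical
  exact ((Fintype.piFinset fun _ : V => Finset.Icc 1 x).filter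
    (fun c => (∀ v w, G.Adj v w → c v ≠ c w) ∧ ∀ v, c v ∉ r v)).card

private lemma rcount_eq (n x : ℕ) (r : Fin n → Finset ℕ) :
    rcount (⊤ : SimpleGraph (Fin n)) r x = fcnt n x r := by
  classical
  rw [rcount, fcnt, Inj, Finset.filter_filter]
  congr 1
  ext c
  simp only [Finset.mem_filter, SimpleGraph.top_adj, Fintype.mem_piFinset]
  constructor
  · rintro ⟨hpi, hproper, havoid⟩
    refine ⟨hpi, fun a b hab => ?_, havoid⟩
    by_contra hne
    exact hproper a b hne hab
  · rintro ⟨hpi, hinj, havoid⟩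
    exact ⟨hpi, fun a b hne heq => hne (hinj heq), havoid⟩

theorem stmt10 (n k : ℕ) (r : Fin n → Finset ℕ)
    (hr : ∀ v : Fin n, (r v).card = k ∧ r v ⊆ Finset.Icc 1 (k * n)) :
    (∃ N : ℕ, ∀ x ≥ N, ∀ r' : Fin n → Finset ℕ,
        (∀ v : Fin n, (r' v).card = k ∧ r' v ⊆ Finset.Icc 1 (k * n)) →
        rcount (⊤ : SimpleGraph (Fin n)) r' x ≤ rcount (⊤ : SimpleGraph (Fin n)) r x) ↔
      ∀ u v : Fin n, u ≠ v → Disjoint (r u) (r v) := by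
  classical
  have hlift : ∀ x : ℕ, k * n ≤ x → ∀ ρ : Fin n → Finset ℕ,
      (∀ v : Fin n, (ρ v).card = k ∧ ρ v ⊆ Finset.Icc 1 (k * n)) →
      ∀ v, (ρ v).card = k ∧ ρ v ⊆ Finset.Icc 1 x := by
    intro x hx ρ hρ v
    exact ⟨(hρ v).1, (hρ v).2.trans (Finset.Icc_subset_Icc_right hx)⟩
  constructor
  · rintro ⟨N, hN⟩ u v huv
    by_contra hnd
    set X := max N (n + k * n + n.choose 3 * k ^ 3 + 3) with hX
    have hXN : N ≤ X := le_max_left _ _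
    have hX2 : n + k * n + n.choose 3 * k ^ 3 + 3 ≤ X := le_max_right _ _
    have hpr : ∀ v : Fin n, ((pr n k) v).card = k ∧ (pr n k) v ⊆ Finset.Icc 1 (k * n) :=
      fun v => ⟨pr_card n k v, pr_sub n k v⟩
    have h := hN X hXN (pr n k) hpr
    rw [rcount_eq, rcount_eq] at h
    have hlt := main_lt n X k (pr n k) r
      (hlift X (by omega) (pr n k) hpr)
      (pr_disj n k)
      (hlift X (by omega) r hr)
      u v huv hnd (by omega) (by omega)
    omega
  · intro hd
    refine ⟨n + k * n + n.choose 3 * k ^ 3 + 3, fun x hx r' hr' => ?_⟩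
    rw [rcount_eq, rcount_eq]
    have hrx := hlift x (by omega) r hr
    have hr'x := hlift x (by omega) r' hr'
    by_cases hd' : ∀ u v : Fin n, u ≠ v → Disjoint (r' u) (r' v)
    · exact le_of_eq (fcnt_proper_eq n x k r' r (fun v => (hr'x v).1) (fun v => (hr'x v).2) hd'
        (fun v => (hrx v).1) (fun v => (hrx v).2) hd)
    · push_neg at hd'
      obtain ⟨u, v, huv, hnd⟩ := hd'
      exact le_of_lt (main_lt n x k r r' hrx hd hr'x u v huv hnd (by omega) (by omega))
end

section
/- For the path P_4 with vertices v_1,v_2,v_3,v_4 and edges v_1v_2, v_2v_3, v_3v_4, the simple restraints r = [{1},{2},{2},{1}] and r' = [{1},{2},{3},{3}] satisfy π_r(P_4,x) = π_{r'}(P_4,x) = x^4 − 7x^3 + 20x^2 − 28x + 16 for all x ≥ 4, even though r and r' are not equivalent. -/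
/-- Two restraints on `G` are equivalent if one arises from the other via a graph automorphism
together with a bijection between the sets of used restraint colours. -/
def restraintEquiv {V : Type} [Fintype V] [DecidableEq V] (G : SimpleGraph V)
    (r r' : V → Finset ℕ) : Prop :=
  ∃ φ : G ≃g G, ∃ f : ℕ → ℕ,
    Set.InjOn f ↑(Finset.univ.biUnion r) ∧ ∀ u : V, (r u).image f = r' (φ u)

/-- The path `P₄` with vertices `0,1,2,3` and edges `01, 12, 23`. -/
def P4 : SimpleGraph (Fin 4) := SimpleGraph.fromRel (fun i j => j.val = i.val + 1)

lemma adj_iff (c : Fin 4 → ℕ) :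
    (∀ v w, P4.Adj v w → c v ≠ c w) ↔ (c 0 ≠ c 1 ∧ c 1 ≠ c 2 ∧ c 2 ≠ c 3) := by
  constructor
  · intro h
    exact ⟨h 0 1 ⟨by decide, Or.inl rfl⟩, h 1 2 ⟨by decide, Or.inl rfl⟩,
      h 2 3 ⟨by decide, Or.inl rfl⟩⟩
  · rintro ⟨h1, h2, h3⟩ v w hvw
    obtain ⟨hne, h⟩ := hvw
    fin_cases v <;> fin_cases w <;> simp_all [Ne.symm]

open Finset in
lemma rcount_eq_s12 (x e0 e1 e2 e3 : ℕ) :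
    rcount P4 ![{e0},{e1},{e2},{e3}] x =
      ∑ a ∈ Icc 1 x, ∑ b ∈ Icc 1 x, ∑ c ∈ Icc 1 x, ∑ d ∈ Icc 1 x,
        if ((a ≠ e0 ∧ (b ≠ e1 ∧ b ≠ a)) ∧ (c ≠ e2 ∧ c ≠ b)) ∧ (d ≠ e3 ∧ d ≠ c) then 1 else 0 := by
  classical
  unfold rcount
  have key : ((Fintype.piFinset fun _ : Fin 4 => Finset.Icc 1 x).filter
      (fun c => (∀ v w, P4.Adj v w → c v ≠ c w) ∧
        ∀ v, c v ∉ (![{e0},{e1},{e2},{e3}] : Fin 4 → Finset ℕ) v)).card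
      = (((Icc 1 x) ×ˢ (Icc 1 x) ×ˢ (Icc 1 x) ×ˢ (Icc 1 x)).filter
        (fun p => ((p.1 ≠ e0 ∧ (p.2.1 ≠ e1 ∧ p.2.1 ≠ p.1)) ∧
          (p.2.2.1 ≠ e2 ∧ p.2.2.1 ≠ p.2.1)) ∧ (p.2.2.2 ≠ e3 ∧ p.2.2.2 ≠ p.2.2.1))).card := by
    apply Finset.card_bij' (fun c (_ : c ∈ _) => (c 0, c 1, c 2, c 3))
        (fun p (_ : p ∈ _) => ![p.1, p.2.1, p.2.2.1, p.2.2.2])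
    · intro c hc
      simp only [Finset.mem_filter, Fintype.mem_piFinset] at hc ⊢
      obtain ⟨hmem, hadj, hres⟩ := hc
      rw [adj_iff] at hadj
      refine ⟨?_, ?_⟩
      · simp [Finset.mem_product, hmem 0, hmem 1, hmem 2, hmem 3]
      · have h0 := hres 0; have h1 := hres 1; have h2 := hres 2; have h3 := hres 3
        simp only [Matrix.cons_val_zero, Matrix.cons_val_one, Matrix.head_cons,
          Finset.mem_singleton] at h0 h1 h2 h3 ⊢
        exact ⟨⟨⟨h0, h1, fun h => hadj.1 h.symm⟩, by simpa using hres 2,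
          fun h => hadj.2.1 h.symm⟩, by simpa using hres 3, fun h => hadj.2.2 h.symm⟩
    · intro p hp
      simp only [Finset.mem_filter, Finset.mem_product] at hp
      obtain ⟨⟨m0, m1, m2, m3⟩, q⟩ := hp
      simp only [Finset.mem_filter, Fintype.mem_piFinset]
      refine ⟨fun i => by fin_cases i <;> simp_all [Finset.mem_Icc], ?_, ?_⟩
      · rw [adj_iff]
        exact ⟨fun h => q.1.1.2.2 h.symm, fun h => q.1.2.2 h.symm, fun h => q.2.2 h.symm⟩
      · intro v
        fin_cases v <;> simp [q.1.1.1, q.1.1.2.1, q.1.2.1, q.2.1]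
    · intro c hc
      funext v
      fin_cases v <;> rfl
    · intro p hp
      rfl
  refine Eq.trans ?_ (Eq.trans key ?_)
  · congr!
  · rw [Finset.card_filter]
    simp only [Finset.sum_product]

open Finset in
lemma step {s : Finset ℕ} (P : Prop) [Decidable P] (q : ℕ → Prop) [DecidablePred q] (f : ℕ → ℕ) :
    (∑ d ∈ s, if P ∧ q d then f d else 0) = if P then (∑ d ∈ s.filter q, f d) else 0 := by
  by_cases h : P
  · simp only [h, true_and, if_true, Finset.sum_filter]
  · simp [h]

open Finset in
lemma card2 {x u v : ℕ} (hu : u ∈ Icc 1 x) (hv : v ∈ Icc 1 x) :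
    ((Icc 1 x).filter fun d => d ≠ u ∧ d ≠ v).card = x - (if u = v then 1 else 2) := by
  have h : (Icc 1 x).filter (fun d => d ≠ u ∧ d ≠ v) = Icc 1 x \ {u, v} := by
    ext d; simp [not_or]
  rw [h, Finset.card_sdiff_of_subset (by
    intro z hz
    simp only [Finset.mem_insert, Finset.mem_singleton] at hz
    rcases hz with rfl | rfl <;> assumption)]
  congr 1
  · rw [Nat.card_Icc]; omega
  · by_cases h' : u = v
    · subst h'; simp
    · rw [Finset.card_insert_of_notMem (by simp [h']), Finset.card_singleton, if_neg h']

open Finset in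
lemma hd_lemma {x : ℕ} (hx : 4 ≤ x) (X : Prop) [Decidable X] (e u : ℕ)
    (he : e ∈ Icc 1 x) (hu : u ∈ Icc 1 x) :
    (∑ d ∈ Icc 1 x, if X ∧ (d ≠ e ∧ d ≠ u) then 1 else 0)
      = if X then x - (if e = u then 1 else 2) else 0 := by
  rw [step X (fun d => d ≠ e ∧ d ≠ u) (fun _ => 1)]
  by_cases h : X <;> simp [h, card2 he hu]

open Finset in
lemma sum_ite01 (s : Finset ℕ) (e : ℕ) :
    (∑ b ∈ s, if b = e then 0 else 1) = s.card - (if e ∈ s then 1 else 0) := by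
  have h : (∑ b ∈ s, if b = e then 0 else 1) + (∑ b ∈ s, if b = e then 1 else 0) = s.card := by
    rw [← Finset.sum_add_distrib]
    simp only [Finset.card_eq_sum_ones]
    exact Finset.sum_congr rfl fun b _ => by split_ifs <;> rfl
  have h2 : (∑ b ∈ s, if b = e then 1 else 0) = (if e ∈ s then 1 else 0) :=
    Finset.sum_ite_eq' s e (fun _ => 1)
  omega

open Finset in
lemma card_filter_ne (x e : ℕ) (he : e ∈ Icc 1 x) :
    ((Icc 1 x).filter fun b => b ≠ e).card = x - 1 := by
  have h : (Icc 1 x).filter (fun b => b ≠ e) = Icc 1 x \ {e} := by ext b; simp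
  rw [h, Finset.card_sdiff_of_subset (by simpa using he), Nat.card_Icc, Finset.card_singleton]
  omega

open Finset in
lemma count1 (x : ℕ) (hx : 4 ≤ x) :
    rcount P4 ![{1},{2},{2},{1}] x =
      ((x-2)*(x-2))*(x-1) + (x-2) + (((x-2)*(x-2))*(x-2) + (x-3))*(x-2) := by
  have h1 : (1:ℕ) ∈ Icc 1 x := by rw [mem_Icc]; omega
  have h2 : (2:ℕ) ∈ Icc 1 x := by rw [mem_Icc]; omega
  rw [rcount_eq_s12 x 1 2 2 1]
  -- evaluate the two inner sums (over c and d)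
  have e1 : ∀ a, ∀ b ∈ Icc 1 x, (∑ c ∈ Icc 1 x, ∑ d ∈ Icc 1 x,
      (if ((a ≠ 1 ∧ (b ≠ 2 ∧ b ≠ a)) ∧ (c ≠ 2 ∧ c ≠ b)) ∧ (d ≠ 1 ∧ d ≠ c) then 1 else 0))
      = if a ≠ 1 ∧ (b ≠ 2 ∧ b ≠ a) then
          ((x-2)*(x-2) + (if b = 1 then 0 else 1)) else 0 := by
    intro a b hb
    by_cases hP : a ≠ 1 ∧ (b ≠ 2 ∧ b ≠ a)
    · rw [Finset.sum_congr rfl (fun c hc => hd_lemma hx _ 1 c h1 hc),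
        step (a ≠ 1 ∧ (b ≠ 2 ∧ b ≠ a)) (fun c => c ≠ 2 ∧ c ≠ b)
          (fun c => x - (if 1 = c then 1 else 2)), if_pos hP, if_pos hP]
      have hcong : ∀ c ∈ (Icc 1 x).filter (fun c => c ≠ 2 ∧ c ≠ b),
          (x - (if 1 = c then 1 else 2)) = (x-2) + (if c = 1 then 1 else 0) := by
        intro c hc
        by_cases h : c = 1
        · subst h; simp; omega
        · rw [if_neg (fun hh => h hh.symm), if_neg h]; omega
      rw [Finset.sum_congr rfl hcong, Finset.sum_add_distrib, Finset.sum_const,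
        Finset.sum_ite_eq' _ 1 (fun _ => 1), card2 h2 hb,
        if_neg (fun hh : (2:ℕ) = b => hP.2.1 hh.symm), smul_eq_mul]
      congr 1
      by_cases hb1 : b = 1
      · rw [if_pos hb1, if_neg]
        simp only [Finset.mem_filter]
        rintro ⟨-, -, hc⟩
        exact hc hb1.symm
      · rw [if_neg hb1, if_pos]
        simp only [Finset.mem_filter, mem_Icc]
        refine ⟨⟨le_refl 1, by omega⟩, by omega, fun h => hb1 h.symm⟩
    · rw [if_neg hP]
      simp [hP]
  rw [Finset.sum_congr rfl (fun a _ => Finset.sum_congr rfl (fun b hb => e1 a b hb))]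
  -- evaluate the b-sum
  have e2 : ∀ a ∈ Icc 1 x, (∑ b ∈ Icc 1 x,
      if a ≠ 1 ∧ (b ≠ 2 ∧ b ≠ a) then ((x-2)*(x-2) + (if b = 1 then 0 else 1)) else 0)
      = if a ≠ 1 then
          (if a = 2 then ((x-2)*(x-2))*(x-1) + (x-2) else ((x-2)*(x-2))*(x-2) + (x-3))
        else 0 := by
    intro a ha
    rw [step (a ≠ 1) (fun b => b ≠ 2 ∧ b ≠ a)
      (fun b => (x-2)*(x-2) + (if b = 1 then 0 else 1))]
    by_cases hP : a ≠ 1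
    · rw [if_pos hP, if_pos hP, Finset.sum_add_distrib, Finset.sum_const, smul_eq_mul,
        sum_ite01, card2 h2 ha]
      have hmem : (1:ℕ) ∈ (Icc 1 x).filter (fun b => b ≠ 2 ∧ b ≠ a) := by
        simp only [Finset.mem_filter, mem_Icc]
        exact ⟨⟨le_refl 1, by omega⟩, by omega, fun h => hP h.symm⟩
      rw [if_pos hmem]
      by_cases ha2 : a = 2
      · rw [if_pos ha2, if_pos ha2.symm]
        have h' : x - 1 - 1 = x - 2 := by omega
        rw [h']; ring
      · rw [if_neg ha2, if_neg (fun h : (2:ℕ) = a => ha2 h.symm)]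
        have h' : x - 2 - 1 = x - 3 := by omega
        rw [h']; ring
    · rw [if_neg hP, if_neg hP]
  rw [Finset.sum_congr rfl (fun a ha => e2 a ha)]
  -- evaluate the a-sum
  rw [← Finset.sum_filter]
  have h2s : (2:ℕ) ∈ (Icc 1 x).filter (fun a => a ≠ 1) := by
    simp only [Finset.mem_filter, mem_Icc]; omega
  rw [← Finset.add_sum_erase _ _ h2s, if_pos rfl]
  have hrest : ∀ a ∈ (((Icc 1 x).filter (fun a => a ≠ 1)).erase 2),
      (if a = 2 then ((x-2)*(x-2))*(x-1) + (x-2) else ((x-2)*(x-2))*(x-2) + (x-3))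
        = ((x-2)*(x-2))*(x-2) + (x-3) := by
    intro a ha
    rw [if_neg (Finset.ne_of_mem_erase ha)]
  rw [Finset.sum_congr rfl hrest, Finset.sum_const, smul_eq_mul,
    Finset.card_erase_of_mem h2s, card_filter_ne x 1 h1]
  have h' : x - 1 - 1 = x - 2 := by omega
  rw [h']
  ring

open Finset in
lemma count2 (x : ℕ) (hx : 4 ≤ x) :
    rcount P4 ![{1},{2},{3},{3}] x =
      ((x-2)*(x-2))*(x-1) + (x-2) + (x-2)*((x-2)*(x-2))
        + (((x-2)*(x-2))*(x-2) + (x-2))*(x-3) := by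
  have h1 : (1:ℕ) ∈ Icc 1 x := by rw [mem_Icc]; omega
  have h2 : (2:ℕ) ∈ Icc 1 x := by rw [mem_Icc]; omega
  have h3 : (3:ℕ) ∈ Icc 1 x := by rw [mem_Icc]; omega
  rw [rcount_eq_s12 x 1 2 3 3]
  have e1 : ∀ a, ∀ b ∈ Icc 1 x, (∑ c ∈ Icc 1 x, ∑ d ∈ Icc 1 x,
      (if ((a ≠ 1 ∧ (b ≠ 2 ∧ b ≠ a)) ∧ (c ≠ 3 ∧ c ≠ b)) ∧ (d ≠ 3 ∧ d ≠ c) then 1 else 0))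
      = if a ≠ 1 ∧ (b ≠ 2 ∧ b ≠ a) then
          ((x-2)*(x-2) + (if b = 3 then (x-2) else 0)) else 0 := by
    intro a b hb
    by_cases hP : a ≠ 1 ∧ (b ≠ 2 ∧ b ≠ a)
    · rw [Finset.sum_congr rfl (fun c hc => hd_lemma hx _ 3 c h3 hc),
        step (a ≠ 1 ∧ (b ≠ 2 ∧ b ≠ a)) (fun c => c ≠ 3 ∧ c ≠ b)
          (fun c => x - (if 3 = c then 1 else 2)), if_pos hP, if_pos hP]
      have hcong : ∀ c ∈ (Icc 1 x).filter (fun c => c ≠ 3 ∧ c ≠ b),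
          (x - (if 3 = c then 1 else 2)) = x - 2 := by
        intro c hc
        simp only [Finset.mem_filter] at hc
        rw [if_neg (fun hh => hc.2.1 hh.symm)]
      rw [Finset.sum_congr rfl hcong, Finset.sum_const, card2 h3 hb, smul_eq_mul]
      by_cases hb3 : b = 3
      · rw [if_pos hb3.symm, if_pos hb3]
        have h' : x - 1 = (x - 2) + 1 := by omega
        rw [h']; ring
      · rw [if_neg (fun hh : (3:ℕ) = b => hb3 hh.symm), if_neg hb3]
        simp
    · rw [if_neg hP]
      simp [hP]
  rw [Finset.sum_congr rfl (fun a _ => Finset.sum_congr rfl (fun b hb => e1 a b hb))]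
  have e2 : ∀ a ∈ Icc 1 x, (∑ b ∈ Icc 1 x,
      if a ≠ 1 ∧ (b ≠ 2 ∧ b ≠ a) then ((x-2)*(x-2) + (if b = 3 then (x-2) else 0)) else 0)
      = if a ≠ 1 then
          (if a = 2 then ((x-2)*(x-2))*(x-1) + (x-2)
            else if a = 3 then (x-2)*((x-2)*(x-2))
            else (x-2)*((x-2)*(x-2)) + (x-2))
        else 0 := by
    intro a ha
    rw [step (a ≠ 1) (fun b => b ≠ 2 ∧ b ≠ a)
      (fun b => (x-2)*(x-2) + (if b = 3 then (x-2) else 0))]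
    by_cases hP : a ≠ 1
    · rw [if_pos hP, if_pos hP, Finset.sum_add_distrib, Finset.sum_const, smul_eq_mul,
        Finset.sum_ite_eq' _ 3 (fun _ => x-2), card2 h2 ha]
      by_cases ha2 : a = 2
      · rw [if_pos ha2.symm, if_pos ha2, if_pos (by
          simp only [Finset.mem_filter, mem_Icc]
          refine ⟨⟨by omega, by omega⟩, by omega, fun h => by omega⟩)]
        have h' : x - 1 = (x - 2) + 1 := by omega
        rw [h']; ring
      · rw [if_neg (fun hh : (2:ℕ) = a => ha2 hh.symm), if_neg ha2]
        by_cases ha3 : a = 3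
        · rw [if_neg (by
            simp only [Finset.mem_filter]
            rintro ⟨-, -, hc⟩
            exact hc ha3.symm), if_pos ha3]
          simp
        · rw [if_pos (by
            simp only [Finset.mem_filter, mem_Icc]
            refine ⟨⟨by omega, by omega⟩, by omega, fun h => ha3 h.symm⟩), if_neg ha3]
    · rw [if_neg hP, if_neg hP]
  rw [Finset.sum_congr rfl (fun a ha => e2 a ha)]
  rw [← Finset.sum_filter]
  have h2s : (2:ℕ) ∈ (Icc 1 x).filter (fun a => a ≠ 1) := by
    simp only [Finset.mem_filter, mem_Icc]; omega
  rw [← Finset.add_sum_erase _ _ h2s, if_pos rfl]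
  have h3s : (3:ℕ) ∈ ((Icc 1 x).filter (fun a => a ≠ 1)).erase 2 := by
    simp only [Finset.mem_erase, Finset.mem_filter, mem_Icc]; omega
  rw [← Finset.add_sum_erase _ _ h3s, if_neg (by omega), if_pos rfl]
  have hrest : ∀ a ∈ ((((Icc 1 x).filter (fun a => a ≠ 1)).erase 2).erase 3),
      (if a = 2 then ((x-2)*(x-2))*(x-1) + (x-2)
        else if a = 3 then (x-2)*((x-2)*(x-2))
        else (x-2)*((x-2)*(x-2)) + (x-2))
        = (x-2)*((x-2)*(x-2)) + (x-2) := by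
    intro a ha
    rw [if_neg (Finset.ne_of_mem_erase (Finset.mem_of_mem_erase ha)),
      if_neg (Finset.ne_of_mem_erase ha)]
  rw [Finset.sum_congr rfl hrest, Finset.sum_const, smul_eq_mul,
    Finset.card_erase_of_mem h3s, Finset.card_erase_of_mem h2s, card_filter_ne x 1 h1]
  have h' : x - 1 - 1 - 1 = x - 3 := by omega
  rw [h']
  ring

theorem stmt12 :
    (∀ x : ℕ, 4 ≤ x →
        (rcount P4 ![({1} : Finset ℕ), {2}, {2}, {1}] x : ℤ) =
          (x : ℤ) ^ 4 - 7 * (x : ℤ) ^ 3 + 20 * (x : ℤ) ^ 2 - 28 * (x : ℤ) + 16 ∧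
        (rcount P4 ![({1} : Finset ℕ), {2}, {3}, {3}] x : ℤ) =
          (x : ℤ) ^ 4 - 7 * (x : ℤ) ^ 3 + 20 * (x : ℤ) ^ 2 - 28 * (x : ℤ) + 16) ∧
      ¬ restraintEquiv P4 ![({1} : Finset ℕ), {2}, {2}, {1}]
          ![({1} : Finset ℕ), {2}, {3}, {3}] := by
  constructor
  · intro x hx
    obtain ⟨y, rfl⟩ : ∃ y, x = y + 4 := ⟨x - 4, by omega⟩
    have a1 : y + 4 - 1 = y + 3 := by omega
    have a2 : y + 4 - 2 = y + 2 := by omega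
    have a3 : y + 4 - 3 = y + 1 := by omega
    constructor
    · rw [count1 _ hx, a1, a2, a3]
      push_cast
      ring
    · rw [count2 _ hx, a1, a2, a3]
      push_cast
      ring
  · rintro ⟨φ, f, -, h⟩
    have key : ({1, 2} : Finset ℕ).image f = {1, 2, 3} := by
      have h1 : (Finset.univ.biUnion ![({1} : Finset ℕ), {2}, {2}, {1}]) = {1, 2} := by decide
      have h2 : (Finset.univ.biUnion ![({1} : Finset ℕ), {2}, {3}, {3}]) = {1, 2, 3} := by decide
      rw [← h1, ← h2, Finset.biUnion_image]
      ext n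
      simp only [Finset.mem_biUnion, Finset.mem_univ, true_and, h]
      constructor
      · rintro ⟨u, hu⟩; exact ⟨φ u, hu⟩
      · rintro ⟨v, hv⟩; exact ⟨φ.symm v, by rw [φ.apply_symm_apply]; exact hv⟩
    have hle : ({1, 2, 3} : Finset ℕ).card ≤ ({1, 2} : Finset ℕ).card :=
      key ▸ Finset.card_image_le
    have c1 : ({1, 2, 3} : Finset ℕ).card = 3 := by decide
    have c2 : ({1, 2} : Finset ℕ).card = 2 := by decide
    omega
end

section
/- Let G be a connected bipartite graph with bipartition (V_1, V_2), |V(G)| ≥ 2, and let r be a proper k-restraint on G that is not an alternating restraint up to equivalence. Then there exist a vertex u and two distinct vertices v, w ∈ N_G(u) with |r(v) ∩ r(w)| < k; consequently Σ_{u∈V(G)} Σ_{{v,w}⊆N_G(u), v≠w} |r(v)∩r(w)| < Σ_{u∈V(G)} Σ_{{v,w}⊆N_G(u), v≠w} |r_{alt}(v)∩r_{alt}(w)|, where r_{alt} is any alternating k-restraint. -/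
/-- `ralt` is an alternating `k`-restraint with respect to the bipartition given by `bpart`:
it is constant on each part, with two disjoint `k`-element sets of colours from `{1,…,kn}`. -/
def IsAlternating {V : Type} [Fintype V] (bpart : V → Bool) (k : ℕ)
    (ralt : V → Finset ℕ) : Prop :=
  ∃ A B : Finset ℕ, A.card = k ∧ B.card = k ∧ Disjoint A B ∧
    A ⊆ Finset.Icc 1 (k * Fintype.card V) ∧ B ⊆ Finset.Icc 1 (k * Fintype.card V) ∧
    ∀ v : V, ralt v = if bpart v then A else B

/-- `∑_{u} ∑_{v,w ∈ N(u), v ≠ w} |s(v) ∩ s(w)|` (sum over ordered pairs of distinct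
neighbours of `u`). -/
def pairSum {V : Type} [Fintype V] [DecidableEq V] (G : SimpleGraph V) [DecidableRel G.Adj]
    (s : V → Finset ℕ) : ℕ :=
  ∑ u : V, ∑ v ∈ G.neighborFinset u, ∑ w ∈ (G.neighborFinset u).erase v, (s v ∩ s w).card



lemma walkAux {V : Type} (G : SimpleGraph V) (r : V → Finset ℕ)
    (H : ∀ u v w : V, G.Adj u v → G.Adj u w → r v = r w) :
    ∀ {a b : V} (p : G.Walk a b),
      (Even p.length → r a = r b) ∧ (¬ Even p.length → ∀ x, G.Adj a x → r x = r b) := by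
  intro a b p
  induction p with
  | nil => exact ⟨fun _ => rfl, fun h => absurd Even.zero h⟩
  | @cons a c b h q ih =>
    constructor
    · intro hev
      rw [SimpleGraph.Walk.length_cons, Nat.even_add_one] at hev
      exact ih.2 hev _ h.symm
    · intro hodd x hx
      rw [SimpleGraph.Walk.length_cons, Nat.even_add_one, not_not] at hodd
      rw [← ih.1 hodd]
      exact H a x c hx h

lemma parAux {V : Type} (G : SimpleGraph V) (bpart : V → Bool)
    (hbip : ∀ u v : V, G.Adj u v → bpart u ≠ bpart v) :
    ∀ {a b : V} (p : G.Walk a b), (bpart a = bpart b ↔ Even p.length) := by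
  intro a b p
  induction p with
  | nil => simp
  | @cons a c b h q ih =>
    have hne := hbip _ _ h
    rw [SimpleGraph.Walk.length_cons, Nat.even_add_one, ← ih]
    cases ha : bpart a <;> cases hc : bpart c <;> cases hb : bpart b <;> simp_all

theorem stmt17 {V : Type} [Fintype V] [DecidableEq V] (G : SimpleGraph V) [DecidableRel G.Adj]
    (hconn : G.Connected) (hcard : 2 ≤ Fintype.card V)
    (bpart : V → Bool) (hbip : ∀ u v : V, G.Adj u v → bpart u ≠ bpart v)
    (k : ℕ) (hk : 1 ≤ k) (r : V → Finset ℕ)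
    (hr : ∀ v : V, (r v).card = k ∧ r v ⊆ Finset.Icc 1 (k * Fintype.card V))
    (hproper : ∀ u v : V, G.Adj u v → Disjoint (r u) (r v))
    (hne : ∀ ralt : V → Finset ℕ, IsAlternating bpart k ralt → ¬ restraintEquiv G r ralt) :
    (∃ u v w : V, v ≠ w ∧ G.Adj u v ∧ G.Adj u w ∧ (r v ∩ r w).card < k) ∧
      ∀ ralt : V → Finset ℕ, IsAlternating bpart k ralt →
        pairSum G r < pairSum G ralt := by
  classical
  have key : ∃ u v w : V, v ≠ w ∧ G.Adj u v ∧ G.Adj u w ∧ (r v ∩ r w).card < k := by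
    by_contra hc
    push_neg at hc
    have H : ∀ u v w : V, G.Adj u v → G.Adj u w → r v = r w := by
      intro u v w hv hw
      by_cases hvw : v = w
      · subst hvw; rfl
      · have h1 : k ≤ (r v ∩ r w).card := hc u v w hvw hv hw
        have h2 : r v ∩ r w = r v :=
          Finset.eq_of_subset_of_card_le Finset.inter_subset_left (by rw [(hr v).1]; exact h1)
        have h3 : r v ∩ r w = r w :=
          Finset.eq_of_subset_of_card_le Finset.inter_subset_right (by rw [(hr w).1]; exact h1)
        rw [← h2, h3]
    have hconst : ∀ a b : V, bpart a = bpart b → r a = r b := by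
      intro a b hab
      obtain ⟨p⟩ := hconn.preconnected a b
      exact (walkAux G r H p).1 ((parAux G bpart hbip p).mp hab)
    obtain ⟨a, b, hab⟩ := Fintype.exists_pair_of_one_lt_card hcard
    obtain ⟨p⟩ := hconn.preconnected a b
    obtain ⟨x, y, hxy, hx, hy⟩ : ∃ x y : V, G.Adj x y ∧ bpart x = true ∧ bpart y = false := by
      cases p with
      | nil => exact absurd rfl hab
      | cons h q =>
        have hne' := hbip _ _ h
        cases hbx : bpart a
        · exact ⟨_, a, h.symm, by cases hby : bpart _ <;> simp_all, hbx⟩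
        · exact ⟨a, _, h, hbx, by cases hby : bpart _ <;> simp_all⟩
    set ralt : V → Finset ℕ := fun v => if bpart v then r x else r y with hralt_def
    have hr_eq : ∀ v, r v = ralt v := by
      intro v
      by_cases hv : bpart v = true
      · show r v = if bpart v then r x else r y
        rw [hv]
        simpa using hconst v x (by rw [hv, hx])
      · have hv' : bpart v = false := by simpa using hv
        show r v = if bpart v then r x else r y
        rw [hv']
        simpa using hconst v y (by rw [hv', hy])
    apply hne ralt
    · exact ⟨r x, r y, (hr x).1, (hr y).1, hproper x y hxy, (hr x).2, (hr y).2, fun v => rfl⟩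
    · refine ⟨SimpleGraph.Iso.refl, id, Set.injOn_id _, fun u => ?_⟩
      simp only [Finset.image_id]
      exact hr_eq u
  refine ⟨key, ?_⟩
  rintro ralt ⟨A, B, hA, hB, hAB, hAs, hBs, hralt⟩
  have hterm : ∀ u v w : V, G.Adj u v → G.Adj u w → (ralt v ∩ ralt w).card = k := by
    intro u v w hv hw
    have h1 := hbip u v hv
    have h2 := hbip u w hw
    have hvw : bpart v = bpart w := by
      cases bpart u <;> cases hbv : bpart v <;> cases hbw : bpart w <;> simp_all
    rw [hralt v, hralt w, hvw]
    cases bpart w <;> simp [Finset.inter_self, hA, hB]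
  have hle3 : ∀ u v w : V, G.Adj u v → G.Adj u w →
      (r v ∩ r w).card ≤ (ralt v ∩ ralt w).card := by
    intro u v w hv hw
    rw [hterm u v w hv hw]
    exact le_trans (Finset.card_le_card Finset.inter_subset_left) (le_of_eq (hr v).1)
  obtain ⟨u, v, w, hvw, huv, huw, hlt⟩ := key
  unfold pairSum
  apply Finset.sum_lt_sum
  · intro u' _
    apply Finset.sum_le_sum
    intro v' hv'
    apply Finset.sum_le_sum
    intro w' hw'
    exact hle3 u' v' w' ((SimpleGraph.mem_neighborFinset _ _ _).mp hv')
      ((SimpleGraph.mem_neighborFinset _ _ _).mp (Finset.mem_erase.mp hw').2)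
  · refine ⟨u, Finset.mem_univ u, ?_⟩
    apply Finset.sum_lt_sum
    · intro v' hv'
      apply Finset.sum_le_sum
      intro w' hw'
      exact hle3 u v' w' ((SimpleGraph.mem_neighborFinset _ _ _).mp hv')
        ((SimpleGraph.mem_neighborFinset _ _ _).mp (Finset.mem_erase.mp hw').2)
    · refine ⟨v, (SimpleGraph.mem_neighborFinset _ _ _).mpr huv, ?_⟩
      apply Finset.sum_lt_sum
      · intro w' hw'
        exact hle3 u v w' huv ((SimpleGraph.mem_neighborFinset _ _ _).mp (Finset.mem_erase.mp hw').2)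
      · refine ⟨w, Finset.mem_erase.mpr ⟨Ne.symm hvw, (SimpleGraph.mem_neighborFinset _ _ _).mpr huw⟩, ?_⟩
        rw [hterm u v w huv huw]
        exact hlt
end
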